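/- Let m and n be non-negative integers and let x_1,…,x_n be nonzero complex numbers with fixed square roots y_i (y_i^2 = x_i) such that the 2n numbers x_1, x_1^{-1}, …, x_n, x_n^{-1} are pairwise distinct. Then so_{(m^n)}(x_1,…,x_n) = (1/D_2(n)) · Σ_{A⊆[n]} (−1)^{(Σ_{a∈A} a) − binom(|A|,2) + n} · (∏_{a∈A} y_a)^{2m+1} · (∏_{a∈A^c} y_a^{−1})^{2m+1} · V(A)·V((A^c)^{−1})·R(A,(A^c)^{−1}), where the sum is over all subsets A of [n], A^c is the complement of A in [n], and D_2(n) = V([n]) · ∏_{i=1}^{n} x_i^{−n+i}(y_i − y_i^{−1}) · ∏_{1≤i<j≤n}(x_i − x_j^{−1}). -/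

import Mathlib

open Matrix Finset

/-- The `2n` variables `x₁, x₁⁻¹, x₂, x₂⁻¹, …, xₙ, xₙ⁻¹`. -/
noncomputable def pairVars {n : ℕ} (x : Fin n → ℂ) : Fin (2 * n) → ℂ :=
  fun i =>
    if (i : ℕ) % 2 = 0 then x ⟨(i : ℕ) / 2, by have := i.isLt; omega⟩
    else (x ⟨(i : ℕ) / 2, by have := i.isLt; omega⟩)⁻¹
/-- The odd orthogonal character `so_λ(x₁,…,x_N)` with *doubled* shape
`lam2 = 2·λ` (so that half-integer shapes are allowed), computed from fixed
square roots `y` of the variables (`y i ^ 2 = x i`). -/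
noncomputable def soChar2 {N : ℕ} (lam2 : Fin N → ℤ) (y : Fin N → ℂ) : ℂ :=
  Matrix.det (Matrix.of fun h t : Fin N =>
      y h ^ (lam2 t + 2 * ((N : ℤ) - 1 - ((t : ℕ) : ℤ)) + 1) -
        y h ^ (-(lam2 t + 2 * ((N : ℤ) - 1 - ((t : ℕ) : ℤ)) + 1))) /
    Matrix.det (Matrix.of fun h t : Fin N =>
      y h ^ (2 * ((N : ℤ) - 1 - ((t : ℕ) : ℤ)) + 1) -
        y h ^ (-(2 * ((N : ℤ) - 1 - ((t : ℕ) : ℤ)) + 1)))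
/-- `V(A) = ∏_{a,b ∈ A, a < b} (x_a - x_b)`. -/
noncomputable def Vprod {M : ℕ} (x : Fin M → ℂ) (A : Finset (Fin M)) : ℂ :=
  ∏ a ∈ A, ∏ b ∈ A, if a < b then x a - x b else 1

/-- `R(A, B⁻¹) = ∏_{a ∈ A} ∏_{b ∈ B} (x_a - x_b⁻¹)`. -/
noncomputable def Rprod {M : ℕ} (x : Fin M → ℂ) (A B : Finset (Fin M)) : ℂ :=
  ∏ a ∈ A, ∏ b ∈ B, (x a - (x b)⁻¹)



section Helpers
open Polynomial

/-- Chebyshev-like polynomials: `qpoly j (x + x⁻¹) = ∑_{k=-j}^{j} x^k`. -/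
noncomputable def qpoly : ℕ → Polynomial ℂ
  | 0 => 1
  | 1 => Polynomial.X + 1
  | (j+2) => Polynomial.X * qpoly (j+1) - qpoly j

lemma qpoly_monic_deg : ∀ j : ℕ, (qpoly j).Monic ∧ (qpoly j).natDegree = j
  | 0 => by simp [qpoly, monic_one]
  | 1 => by
      constructor
      · simpa [qpoly] using monic_X_add_C (1 : ℂ)
      · simpa [qpoly] using natDegree_X_add_C (1 : ℂ)
  | (j+2) => by
      obtain ⟨h1m, h1d⟩ := qpoly_monic_deg (j+1)
      obtain ⟨h0m, h0d⟩ := qpoly_monic_deg j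
      have hXm : (Polynomial.X * qpoly (j+1)).Monic := monic_X.mul h1m
      have hXd : (Polynomial.X * qpoly (j+1)).natDegree = j + 2 := by
        rw [natDegree_X_mul h1m.ne_zero, h1d]
      have hdeg : (-(qpoly j)).degree < (Polynomial.X * qpoly (j+1)).degree := by
        rw [degree_neg, degree_eq_natDegree hXm.ne_zero, hXd]
        calc (qpoly j).degree ≤ (qpoly j).natDegree := degree_le_natDegree
          _ < ((j+2 : ℕ) : WithBot ℕ) := by
              rw [h0d]; exact_mod_cast Nat.lt_succ_of_lt (Nat.lt_succ_self j)
      have key : qpoly (j+2) = Polynomial.X * qpoly (j+1) + (-(qpoly j)) := by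
        rw [qpoly]; ring
      constructor
      · rw [key]; exact hXm.add_of_left hdeg
      · rw [key, natDegree_add_eq_left_of_degree_lt hdeg, hXd]

lemma qpoly_eval (y : ℂ) (hy : y ≠ 0) : ∀ j : ℕ,
    (y - y⁻¹) * (qpoly j).eval (y ^ 2 + (y ^ 2)⁻¹)
      = y ^ (2 * (j : ℤ) + 1) - y ^ (-(2 * (j : ℤ) + 1))
  | 0 => by
      simp only [qpoly, eval_one, mul_one, Nat.cast_zero, mul_zero, zero_add]
      rw [_root_.zpow_neg, zpow_one]
  | 1 => by
      simp only [qpoly, eval_add, eval_X, eval_one, Nat.cast_one]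
      have h3 : (2 * (1:ℤ) + 1) = ((3:ℕ) : ℤ) := by norm_num
      rw [h3, _root_.zpow_neg, zpow_natCast]
      field_simp
      ring
  | (j+2) => by
      have e1 := qpoly_eval y hy (j+1)
      have e0 := qpoly_eval y hy j
      have hw : y ^ (2 * (j : ℤ) + 1) ≠ 0 := zpow_ne_zero _ hy
      set w := y ^ (2 * (j : ℤ) + 1) with hwdef
      have hsq : ((y:ℂ)^2)^(2:ℕ) = y ^ (4:ℕ) := by ring
      have c1 : y ^ (2 * ((j:ℤ)+1) + 1) = w * y ^ (2:ℕ) := by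
        rw [hwdef, ← zpow_natCast y 2, ← zpow_add₀ hy]; ring_nf
      have c2 : y ^ (2 * ((j:ℤ)+2) + 1) = w * ((y:ℂ)^2) ^ (2:ℕ) := by
        rw [hsq, hwdef, ← zpow_natCast y 4, ← zpow_add₀ hy]; ring_nf
      have d0 : y ^ (-(2 * (j:ℤ) + 1)) = w⁻¹ := by rw [_root_.zpow_neg]
      have d1 : y ^ (-(2 * ((j:ℤ)+1) + 1)) = w⁻¹ * (y ^ (2:ℕ))⁻¹ := by
        rw [_root_.zpow_neg, c1, mul_inv]
      have d2 : y ^ (-(2 * ((j:ℤ)+2) + 1)) = w⁻¹ * (((y:ℂ)^2) ^ (2:ℕ))⁻¹ := by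
        rw [_root_.zpow_neg, c2, mul_inv]
      have key : qpoly (j+2) = Polynomial.X * qpoly (j+1) - qpoly j := by rw [qpoly]
      rw [key, eval_sub, eval_mul, eval_X, mul_sub]
      push_cast at e1 e0 ⊢
      rw [mul_left_comm (y - y⁻¹), e1, e0, c2, d2, c1, d1, d0]
      have ha : ((y:ℂ)^2) ≠ 0 := pow_ne_zero _ hy
      field_simp
      ring

lemma prod_if_lt_eq_Ioi {n : ℕ} (g : Fin n → ℂ) (i : Fin n) :
    (∏ j : Fin n, if i < j then g j else 1) = ∏ j ∈ Ioi i, g j := by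
  rw [← Finset.filter_lt_eq_Ioi, Finset.prod_filter]

lemma prod_prod_rev {n : ℕ} (f : Fin n → Fin n → ℂ) :
    (∏ i : Fin n, ∏ j : Fin n, f i j)
      = ∏ i : Fin n, ∏ j : Fin n, f (Fin.rev i) (Fin.rev j) := by
  rw [← Equiv.prod_comp Fin.revPerm (fun i => ∏ j, f i j)]
  exact Finset.prod_congr rfl fun i _ =>
    (Equiv.prod_comp Fin.revPerm (fun j => f (Fin.revPerm i) j)).symm

lemma det_rev_poly {n : ℕ} (p : ℕ → Polynomial ℂ)
    (hm : ∀ j, (p j).Monic) (hd : ∀ j, (p j).natDegree = j) (u : Fin n → ℂ) :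
    (Matrix.of fun h t : Fin n => (p (n - 1 - (t : ℕ))).eval (u h)).det
      = ∏ i : Fin n, ∏ j : Fin n, if i < j then u i - u j else 1 := by
  have hrev : ∀ t : Fin n, n - 1 - (t : ℕ) = ((Fin.rev t : Fin n) : ℕ) := by
    intro t; rw [Fin.val_rev]; omega
  have key : (Matrix.of fun h t : Fin n => (p (n - 1 - (t : ℕ))).eval (u h))
      = (Matrix.of fun h t : Fin n =>
          ((p ((t : ℕ))).eval ((u ∘ Fin.rev) h))).submatrix Fin.revPerm Fin.revPerm := by
    ext h t
    simp only [Matrix.submatrix_apply, Matrix.of_apply, Function.comp_apply, hrev t]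
    simp [Fin.revPerm]
  rw [key, Matrix.det_submatrix_equiv_self,
    ← Matrix.det_eval_matrixOfPolynomials_eq_det_vandermonde (u ∘ Fin.rev)
      (fun s : Fin n => p (s : ℕ)) (fun i => hd _) (fun i => hm _),
    Matrix.det_vandermonde]
  have step1 : ∀ i : Fin n, (∏ j ∈ Ioi i, ((u ∘ Fin.rev) j - (u ∘ Fin.rev) i))
      = ∏ j : Fin n, if i < j then u (Fin.rev j) - u (Fin.rev i) else 1 := by
    intro i
    rw [prod_if_lt_eq_Ioi]
    rfl
  rw [Finset.prod_congr rfl fun i _ => step1 i]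
  rw [prod_prod_rev (fun i j => if i < j then u (Fin.rev j) - u (Fin.rev i) else 1)]
  simp only [Fin.rev_lt_rev, Fin.rev_rev]
  rw [Finset.prod_comm]

lemma sum_filter_lt_card {n : ℕ} (A : Finset (Fin n)) :
    (∑ a ∈ A, (A.filter (· < a)).card) = (A.card).choose 2 := by
  induction A using Finset.induction_on_max with
  | empty => simp
  | insert b A hb ih =>
      have hbA : b ∉ A := fun h => lt_irrefl b (hb b h)
      rw [Finset.sum_insert hbA]
      have h1 : ((insert b A).filter (· < b)) = A := by
        ext c
        simp only [Finset.mem_filter, Finset.mem_insert]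
        constructor
        · rintro ⟨(rfl | hc), hlt⟩
          · exact absurd hlt (lt_irrefl _)
          · exact hc
        · exact fun hc => ⟨Or.inr hc, hb c hc⟩
      have h2 : ∀ a ∈ A, ((insert b A).filter (· < a)) = A.filter (· < a) := by
        intro a ha
        ext c
        simp only [Finset.mem_filter, Finset.mem_insert]
        constructor
        · rintro ⟨(rfl | hc), hlt⟩
          · exact absurd (hlt.trans (hb a ha)) (lt_irrefl _)
          · exact ⟨hc, hlt⟩
        · exact fun ⟨hc, hlt⟩ => ⟨Or.inr hc, hlt⟩
      rw [h1, Finset.sum_congr rfl fun a ha => by rw [h2 a ha], ih,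
        Finset.card_insert_of_notMem hbA]
      have : (A.card + 1).choose 2 = A.card.choose 1 + A.card.choose 2 :=
        Nat.choose_succ_succ A.card 1
      rw [this, Nat.choose_one_right]

lemma fin_val_eq_card_filter {n : ℕ} (a : Fin n) (A : Finset (Fin n)) :
    (a : ℕ) = (A.filter (· < a)).card + (Aᶜ.filter (· < a)).card := by
  have h0 : (a : ℕ) = (Finset.univ.filter (· < a)).card := by
    rw [Finset.filter_gt_eq_Iio, Fin.card_Iio]
  rw [h0, ← Finset.card_union_of_disjoint, ← Finset.filter_union, Finset.union_compl]
  exact Finset.disjoint_filter_filter (disjoint_compl_right)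

lemma neg_one_zpow_eq_pow (b : ℕ) (a : ℤ) (c : ℤ) (h : a = (b : ℤ) + 2 * c) :
    (-1 : ℂ) ^ a = (-1 : ℂ) ^ b := by
  rw [h, zpow_add₀ (by norm_num : (-1 : ℂ) ≠ 0), zpow_natCast,
    Even.neg_one_zpow ⟨c, by ring⟩, mul_one]

lemma split_pairs {n : ℕ} (x : Fin n → ℂ) (A : Finset (Fin n)) :
    (∏ i : Fin n, ∏ j : Fin n, if i < j then
        (if i ∈ A then x i else (x i)⁻¹) - (if j ∈ A then x j else (x j)⁻¹) else 1)
      = (-1 : ℂ) ^ (∑ a ∈ A, (Aᶜ.filter (· < a)).card) *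
        (Vprod x A * Vprod (fun i => (x i)⁻¹) Aᶜ * Rprod x A Aᶜ) := by
  set Z : Fin n → ℂ := fun h => if h ∈ A then x h else (x h)⁻¹ with hZ
  have hsplit : ∀ g : Fin n → ℂ, (∏ i : Fin n, g i) = (∏ i ∈ A, g i) * ∏ i ∈ Aᶜ, g i := by
    intro g
    rw [← Finset.prod_union (disjoint_compl_right), Finset.union_compl]
  calc (∏ i : Fin n, ∏ j : Fin n, if i < j then Z i - Z j else 1)
      = ((∏ i ∈ A, ∏ j ∈ A, if i < j then Z i - Z j else 1) *
          ∏ i ∈ A, ∏ j ∈ Aᶜ, if i < j then Z i - Z j else 1) *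
        ((∏ i ∈ Aᶜ, ∏ j ∈ A, if i < j then Z i - Z j else 1) *
          ∏ i ∈ Aᶜ, ∏ j ∈ Aᶜ, if i < j then Z i - Z j else 1) := by
        rw [hsplit (fun i => ∏ j : Fin n, if i < j then Z i - Z j else 1)]
        rw [Finset.prod_congr rfl fun i (_ : i ∈ A) =>
          hsplit (fun j => if i < j then Z i - Z j else 1),
          Finset.prod_congr rfl fun i (_ : i ∈ Aᶜ) =>
          hsplit (fun j => if i < j then Z i - Z j else 1),
          Finset.prod_mul_distrib, Finset.prod_mul_distrib]
    _ = (Vprod x A * ∏ i ∈ A, ∏ j ∈ Aᶜ, if i < j then x i - (x j)⁻¹ else 1) *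
        ((∏ i ∈ Aᶜ, ∏ j ∈ A, if i < j then (x i)⁻¹ - x j else 1) *
          Vprod (fun i => (x i)⁻¹) Aᶜ) := by
        congr 1
        · congr 1
          · exact Finset.prod_congr rfl fun i hi => Finset.prod_congr rfl fun j hj => by
              simp only [hZ, if_pos hi, if_pos hj]
          · exact Finset.prod_congr rfl fun i hi => Finset.prod_congr rfl fun j hj => by
              simp only [hZ, if_pos hi, if_neg (Finset.mem_compl.mp hj)]
        · congr 1
          · exact Finset.prod_congr rfl fun i hi => Finset.prod_congr rfl fun j hj => by
              simp only [hZ, if_neg (Finset.mem_compl.mp hi), if_pos hj]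
          · exact Finset.prod_congr rfl fun i hi => Finset.prod_congr rfl fun j hj => by
              simp only [hZ, if_neg (Finset.mem_compl.mp hi), if_neg (Finset.mem_compl.mp hj)]
    _ = (-1 : ℂ) ^ (∑ a ∈ A, (Aᶜ.filter (· < a)).card) *
        (Vprod x A * Vprod (fun i => (x i)⁻¹) Aᶜ * Rprod x A Aᶜ) := by
        have hAc : (∏ i ∈ Aᶜ, ∏ j ∈ A, if i < j then (x i)⁻¹ - x j else 1)
            = (-1 : ℂ) ^ (∑ a ∈ A, (Aᶜ.filter (· < a)).card) *
              ∏ j ∈ A, ∏ i ∈ Aᶜ, if i < j then x j - (x i)⁻¹ else 1 := by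
          rw [Finset.prod_comm]
          have : ∀ j ∈ A, (∏ i ∈ Aᶜ, if i < j then (x i)⁻¹ - x j else 1)
              = ((-1 : ℂ) ^ ((Aᶜ.filter (· < j)).card)) *
                ∏ i ∈ Aᶜ, if i < j then x j - (x i)⁻¹ else 1 := by
            intro j _
            have h1 : (∏ i ∈ Aᶜ, if i < j then (x i)⁻¹ - x j else 1)
                = (∏ i ∈ Aᶜ, (if i < j then (-1:ℂ) else 1)) *
                  ∏ i ∈ Aᶜ, (if i < j then x j - (x i)⁻¹ else 1) := by
              rw [← Finset.prod_mul_distrib]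
              refine Finset.prod_congr rfl fun i _ => ?_
              by_cases h : i < j
              · simp only [if_pos h]; ring
              · simp only [if_neg h, mul_one]
            have h2 : (∏ i ∈ Aᶜ, (if i < j then (-1:ℂ) else 1))
                = (-1:ℂ) ^ ((Aᶜ.filter (· < j)).card) := by
              rw [← Finset.prod_filter, Finset.prod_const]
            rw [h1, h2]
          rw [Finset.prod_congr rfl this, Finset.prod_mul_distrib, Finset.prod_pow_eq_pow_sum]
        rw [hAc]
        have hR : (∏ i ∈ A, ∏ j ∈ Aᶜ, if i < j then x i - (x j)⁻¹ else 1) *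
            (∏ j ∈ A, ∏ i ∈ Aᶜ, if i < j then x j - (x i)⁻¹ else 1) = Rprod x A Aᶜ := by
          rw [← Finset.prod_mul_distrib]
          refine Finset.prod_congr rfl fun a ha => ?_
          rw [← Finset.prod_mul_distrib]
          refine Finset.prod_congr rfl fun c hc => ?_
          have hne : a ≠ c := fun h => (Finset.mem_compl.mp hc) (h ▸ ha)
          rcases lt_or_gt_of_ne hne with h | h
          · rw [if_pos h, if_neg (asymm h), mul_one]
          · rw [if_neg (asymm h), if_pos h, one_mul]
        ring_nf
        rw [Vprod, Vprod, Rprod] at *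
        ring_nf
        rw [← hR]
        ring

end Helpers

/-- **Expansion (4.6).**  Expansion of the odd orthogonal character
`so_{(m^n)}(x₁,…,xₙ)` (computed from square roots `y i` of `x i`) as a sum
over subsets `A ⊆ [n]`, with
`D₂(n) = V([n]) · ∏ᵢ xᵢ^{-n+i}(yᵢ - yᵢ⁻¹) · ∏_{i<j}(xᵢ - xⱼ⁻¹)`.
Elements of `[n]` are represented 0-based, so `Σ_{a∈A} a` becomes
`Σ_{a∈A} (a+1)` and `xᵢ^{-n+i}` becomes `xᵢ^{(i+1)-n}`. -/
theorem so_rectangle_expansion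
    (m n : ℕ) (x y : Fin n → ℂ) (hx : ∀ i, x i ≠ 0) (hy : ∀ i, y i ^ 2 = x i)
    (hdist : Function.Injective (pairVars x)) :
    soChar2 (fun _ => (2 * m : ℤ)) y =
      (1 / (Vprod x Finset.univ *
            (∏ i : Fin n, x i ^ (((i : ℕ) : ℤ) + 1 - n) * (y i - (y i)⁻¹)) *
            (∏ i : Fin n, ∏ j : Fin n, if i < j then x i - (x j)⁻¹ else 1))) *
        ∑ A : Finset (Fin n),
          (-1 : ℂ) ^
              ((∑ a ∈ A, (((a : ℕ) : ℤ) + 1)) - (A.card.choose 2 : ℤ) + (n : ℤ)) *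
            (∏ a ∈ A, y a) ^ (2 * m + 1) * (∏ a ∈ Aᶜ, (y a)⁻¹) ^ (2 * m + 1) *
            (Vprod x A * Vprod (fun i => (x i)⁻¹) Aᶜ * Rprod x A Aᶜ) := by
  classical
  have hyne : ∀ i, y i ≠ 0 := by
    intro i h
    exact hx i (by rw [← hy i, h]; ring)
  set e : Fin n → ℕ := fun t => n - 1 - (t : ℕ) with he
  have hecast : ∀ t : Fin n, ((e t : ℕ) : ℤ) = (n : ℤ) - 1 - ((t : ℕ) : ℤ) := by
    intro t; have := t.isLt; simp only [he]; omega
  have hsplitA : ∀ (A : Finset (Fin n)) (g : Fin n → ℂ),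
      (∏ i : Fin n, g i) = (∏ i ∈ A, g i) * ∏ i ∈ Aᶜ, g i := by
    intro A g
    rw [← Finset.prod_union (disjoint_compl_right), Finset.union_compl]
  -- Numerator
  set aR : Fin n → Fin n → ℂ := fun h t => y h ^ (2 * m + 1) * x h ^ (e t) with haR
  set bR : Fin n → Fin n → ℂ :=
    fun h t => -((y h)⁻¹ ^ (2 * m + 1) * ((x h)⁻¹) ^ (e t)) with hbR
  have hNumM : (Matrix.of fun h t : Fin n =>
      y h ^ (2 * (m : ℤ) + 2 * ((n : ℤ) - 1 - ((t : ℕ) : ℤ)) + 1) -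
        y h ^ (-(2 * (m : ℤ) + 2 * ((n : ℤ) - 1 - ((t : ℕ) : ℤ)) + 1)))
      = aR + bR := by
    funext h t
    have hcast : 2 * (m : ℤ) + 2 * ((n : ℤ) - 1 - ((t : ℕ) : ℤ)) + 1
        = ((2 * m + 2 * e t + 1 : ℕ) : ℤ) := by
      have := hecast t; push_cast; omega
    have hpow : y h ^ (2 * m + 2 * e t + 1) = y h ^ (2 * m + 1) * x h ^ (e t) := by
      rw [← hy h, ← pow_mul, ← pow_add]
      congr 1
      ring
    have hofs : (Matrix.of (fun h t : Fin n =>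
        y h ^ (2 * (m : ℤ) + 2 * ((n : ℤ) - 1 - ((t : ℕ) : ℤ)) + 1) -
        y h ^ (-(2 * (m : ℤ) + 2 * ((n : ℤ) - 1 - ((t : ℕ) : ℤ)) + 1)))) h t
        = y h ^ (2 * (m : ℤ) + 2 * ((n : ℤ) - 1 - ((t : ℕ) : ℤ)) + 1) -
        y h ^ (-(2 * (m : ℤ) + 2 * ((n : ℤ) - 1 - ((t : ℕ) : ℤ)) + 1)) := rfl
    rw [hofs, hcast, _root_.zpow_neg, zpow_natCast, hpow]
    have : (y h ^ (2 * m + 1) * x h ^ (e t))⁻¹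
        = (y h)⁻¹ ^ (2 * m + 1) * ((x h)⁻¹) ^ (e t) := by
      rw [mul_inv, inv_pow, inv_pow]
    rw [this]
    show _ = aR h t + bR h t
    rw [haR, hbR]
    ring
  have hNum : (Matrix.of fun h t : Fin n =>
      y h ^ (2 * (m : ℤ) + 2 * ((n : ℤ) - 1 - ((t : ℕ) : ℤ)) + 1) -
        y h ^ (-(2 * (m : ℤ) + 2 * ((n : ℤ) - 1 - ((t : ℕ) : ℤ)) + 1))).det
      = ∑ A : Finset (Fin n),
          (-1 : ℂ) ^
              ((∑ a ∈ A, (((a : ℕ) : ℤ) + 1)) - (A.card.choose 2 : ℤ) + (n : ℤ)) *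
            (∏ a ∈ A, y a) ^ (2 * m + 1) * (∏ a ∈ Aᶜ, (y a)⁻¹) ^ (2 * m + 1) *
            (Vprod x A * Vprod (fun i => (x i)⁻¹) Aᶜ * Rprod x A Aᶜ) := by
    rw [hNumM]
    refine Eq.trans (MultilinearMap.map_add_univ
      (Matrix.detRowAlternating (R := ℂ) (n := Fin n)).toMultilinearMap aR bR) ?_
    refine Finset.sum_congr rfl fun A _ => ?_
    show Matrix.det (A.piecewise aR bR) = _
    -- rewrite the piecewise matrix in product form
    have hpw : A.piecewise aR bR = Matrix.of fun h t =>
        (if h ∈ A then y h ^ (2 * m + 1) else -((y h)⁻¹ ^ (2 * m + 1))) *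
          ((if h ∈ A then x h else (x h)⁻¹) ^ (e t)) := by
      funext h t
      by_cases hh : h ∈ A
      · rw [Finset.piecewise_eq_of_mem _ _ _ hh]
        simp only [Matrix.of_apply, if_pos hh, haR]
      · rw [Finset.piecewise_eq_of_notMem _ _ _ hh]
        simp only [Matrix.of_apply, if_neg hh, hbR]
        ring
    rw [hpw]
    have hfac : (Matrix.of fun h t : Fin n =>
        (if h ∈ A then y h ^ (2 * m + 1) else -((y h)⁻¹ ^ (2 * m + 1))) *
          ((if h ∈ A then x h else (x h)⁻¹) ^ (e t)))
        = Matrix.of fun h t : Fin n =>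
          (fun h' => if h' ∈ A then y h' ^ (2 * m + 1) else -((y h')⁻¹ ^ (2 * m + 1))) h *
            (Matrix.of fun h' t' : Fin n =>
              ((if h' ∈ A then x h' else (x h')⁻¹) ^ (e t'))) h t := rfl
    rw [hfac, Matrix.det_mul_column]
    have hZdet : (Matrix.of fun h t : Fin n =>
        ((if h ∈ A then x h else (x h)⁻¹) ^ (e t))).det
        = ∏ i : Fin n, ∏ j : Fin n, if i < j then
            (if i ∈ A then x i else (x i)⁻¹) - (if j ∈ A then x j else (x j)⁻¹) else 1 := by
      have : (Matrix.of fun h t : Fin n => ((if h ∈ A then x h else (x h)⁻¹) ^ (e t)))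
          = Matrix.of fun h t : Fin n =>
            (((fun j => (Polynomial.X : Polynomial ℂ) ^ j) (n - 1 - (t : ℕ))).eval
              (if h ∈ A then x h else (x h)⁻¹)) := by
        funext h t
        simp [he]
      rw [this, det_rev_poly (fun j => (Polynomial.X : Polynomial ℂ) ^ j)
        (fun j => Polynomial.monic_X_pow j) (fun j => Polynomial.natDegree_X_pow j)]
    rw [hZdet, split_pairs]
    -- coefficient product
    have hcoef : (∏ h, (if h ∈ A then y h ^ (2 * m + 1) else -((y h)⁻¹ ^ (2 * m + 1))))
        = (-1 : ℂ) ^ (n - A.card) *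
          ((∏ a ∈ A, y a) ^ (2 * m + 1) * (∏ a ∈ Aᶜ, (y a)⁻¹) ^ (2 * m + 1)) := by
      rw [hsplitA A]
      have h1 : (∏ h ∈ A, (if h ∈ A then y h ^ (2 * m + 1) else -((y h)⁻¹ ^ (2 * m + 1))))
          = (∏ a ∈ A, y a) ^ (2 * m + 1) := by
        rw [← Finset.prod_pow]
        exact Finset.prod_congr rfl fun h hh => by rw [if_pos hh]
      have h2 : (∏ h ∈ Aᶜ, (if h ∈ A then y h ^ (2 * m + 1) else -((y h)⁻¹ ^ (2 * m + 1))))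
          = (-1 : ℂ) ^ (n - A.card) * (∏ a ∈ Aᶜ, (y a)⁻¹) ^ (2 * m + 1) := by
        have : ∀ h ∈ Aᶜ, (if h ∈ A then y h ^ (2 * m + 1) else -((y h)⁻¹ ^ (2 * m + 1)))
            = (-1 : ℂ) * ((y h)⁻¹ ^ (2 * m + 1)) := by
          intro h hh
          rw [if_neg (Finset.mem_compl.mp hh)]; ring
        rw [Finset.prod_congr rfl this, Finset.prod_mul_distrib, Finset.prod_const,
          Finset.card_compl, Fintype.card_fin, ← Finset.prod_pow]
      rw [h1, h2]
      ring
    rw [hcoef]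
    -- signs
    have hkle : A.card ≤ n := by
      simpa using Finset.card_le_univ A
    have hS : (∑ a ∈ A, (a : ℕ))
        = A.card.choose 2 + ∑ a ∈ A, (Aᶜ.filter (· < a)).card := by
      rw [← sum_filter_lt_card A, ← Finset.sum_add_distrib]
      exact Finset.sum_congr rfl fun a _ => fin_val_eq_card_filter a A
    have hsign : (-1 : ℂ) ^
          ((∑ a ∈ A, (((a : ℕ) : ℤ) + 1)) - (A.card.choose 2 : ℤ) + (n : ℤ))
        = (-1 : ℂ) ^ ((n - A.card) + ∑ a ∈ A, (Aᶜ.filter (· < a)).card) := by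
      refine neg_one_zpow_eq_pow _ _ (A.card) ?_
      have hsum : (∑ a ∈ A, (((a : ℕ) : ℤ) + 1))
          = ((∑ a ∈ A, (a : ℕ) : ℕ) : ℤ) + (A.card : ℤ) := by
        push_cast
        rw [Finset.sum_add_distrib, Finset.sum_const, nsmul_eq_mul, mul_one]
      rw [hsum]
      have := hS
      omega
    rw [hsign, pow_add]
    ring
  -- Denominator
  have hDen : (Matrix.of fun h t : Fin n =>
      y h ^ (2 * ((n : ℤ) - 1 - ((t : ℕ) : ℤ)) + 1) -
        y h ^ (-(2 * ((n : ℤ) - 1 - ((t : ℕ) : ℤ)) + 1))).det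
      = Vprod x Finset.univ *
          (∏ i : Fin n, x i ^ (((i : ℕ) : ℤ) + 1 - n) * (y i - (y i)⁻¹)) *
          (∏ i : Fin n, ∏ j : Fin n, if i < j then x i - (x j)⁻¹ else 1) := by
    have hDM : (Matrix.of fun h t : Fin n =>
        y h ^ (2 * ((n : ℤ) - 1 - ((t : ℕ) : ℤ)) + 1) -
          y h ^ (-(2 * ((n : ℤ) - 1 - ((t : ℕ) : ℤ)) + 1)))
        = Matrix.of fun h t : Fin n =>
          (y h - (y h)⁻¹) * ((qpoly (n - 1 - (t : ℕ))).eval (x h + (x h)⁻¹)) := by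
      funext h t
      have hq := qpoly_eval (y h) (hyne h) (e t)
      rw [hy h] at hq
      have hexp : 2 * ((n : ℤ) - 1 - ((t : ℕ) : ℤ)) + 1 = 2 * ((e t : ℕ) : ℤ) + 1 := by
        rw [hecast t]
      show y h ^ (2 * ((n : ℤ) - 1 - ((t : ℕ) : ℤ)) + 1) -
          y h ^ (-(2 * ((n : ℤ) - 1 - ((t : ℕ) : ℤ)) + 1))
          = (y h - (y h)⁻¹) * ((qpoly (n - 1 - (t : ℕ))).eval (x h + (x h)⁻¹))
      rw [hexp, ← hq]
    rw [hDM]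
    have hfac : (Matrix.of fun h t : Fin n =>
        (y h - (y h)⁻¹) * ((qpoly (n - 1 - (t : ℕ))).eval (x h + (x h)⁻¹)))
        = Matrix.of fun h t : Fin n =>
          (fun h' => y h' - (y h')⁻¹) h *
            (Matrix.of fun h' t' : Fin n =>
              ((qpoly (n - 1 - (t' : ℕ))).eval (x h' + (x h')⁻¹))) h t := rfl
    rw [hfac, Matrix.det_mul_column]
    rw [det_rev_poly qpoly (fun j => (qpoly_monic_deg j).1) (fun j => (qpoly_monic_deg j).2)
      (fun h => x h + (x h)⁻¹)]
    -- now evaluate the u-Vandermonde product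
    have hu : (∏ i : Fin n, ∏ j : Fin n, if i < j then
          (x i + (x i)⁻¹) - (x j + (x j)⁻¹) else 1)
        = Vprod x Finset.univ *
          ((∏ i : Fin n, ∏ j : Fin n, if i < j then x i - (x j)⁻¹ else 1) *
            ∏ i : Fin n, ((x i)⁻¹) ^ (n - 1 - (i : ℕ))) := by
      have hterm : ∀ i j : Fin n, (if i < j then (x i + (x i)⁻¹) - (x j + (x j)⁻¹) else 1)
          = (if i < j then x i - x j else 1) *
            ((if i < j then x i - (x j)⁻¹ else 1) * (if i < j then (x i)⁻¹ else 1)) := by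
        intro i j
        by_cases h : i < j
        · simp only [if_pos h]
          have hxi := hx i
          have hxj := hx j
          field_simp
          ring
        · simp only [if_neg h, mul_one]
      calc (∏ i : Fin n, ∏ j : Fin n, if i < j then
          (x i + (x i)⁻¹) - (x j + (x j)⁻¹) else 1)
          = ∏ i : Fin n, ∏ j : Fin n, ((if i < j then x i - x j else 1) *
            ((if i < j then x i - (x j)⁻¹ else 1) * (if i < j then (x i)⁻¹ else 1))) :=
            Finset.prod_congr rfl fun i _ => Finset.prod_congr rfl fun j _ => hterm i j
        _ = Vprod x Finset.univ *
            ((∏ i : Fin n, ∏ j : Fin n, if i < j then x i - (x j)⁻¹ else 1) *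
              ∏ i : Fin n, ((x i)⁻¹) ^ (n - 1 - (i : ℕ))) := by
            simp only [Finset.prod_mul_distrib]
            congr 1
            congr 1
            refine Finset.prod_congr rfl fun i _ => ?_
            rw [prod_if_lt_eq_Ioi (fun _ => (x i)⁻¹) i, Finset.prod_const, Fin.card_Ioi]
    rw [hu]
    have hxfact : (∏ i : Fin n, x i ^ (((i : ℕ) : ℤ) + 1 - n) * (y i - (y i)⁻¹))
        = (∏ i : Fin n, ((x i)⁻¹) ^ (n - 1 - (i : ℕ))) * ∏ i : Fin n, (y i - (y i)⁻¹) := by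
      rw [← Finset.prod_mul_distrib]
      refine Finset.prod_congr rfl fun i _ => ?_
      congr 1
      have hz : ((i : ℕ) : ℤ) + 1 - n = -(((n - 1 - (i : ℕ) : ℕ)) : ℤ) := by
        have := i.isLt; omega
      rw [hz, _root_.zpow_neg, zpow_natCast, inv_pow]
    rw [hxfact]
    ring
  -- Final assembly
  rw [soChar2]
  rw [hNum, hDen]
  rw [one_div_mul_eq_div]
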